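/- arXiv:2206.09945 — 2 statements merged into one kernel-verified Lean document; each statement's English description precedes it below -/
import Mathlib

section
/- Assume (A12, A22) is observable and (A, B) is controllable. Then for every K ∈ ℝ^{(n−p)×p} and every μ ∈ ℂ: (i) the complex (n+p)×n matrix [[(A22 + K·A12) − μI_{n−p}, 0],[0, I_p],[A12, I_p]] has full column rank n, and (ii) the complex n×(n+p+m) matrix [[(A22 + K·A12) − μI_{n−p}, 0, K·A12·K + A22·K − K·A11 − A21, K·B1 + B2],[0, I_p, −μI_p, 0]] has full row rank n; that is, the Rosenbrock-type realization of [λI_p − W, V] is irreducible. -/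
open Matrix Polynomial

set_option synthInstance.maxHeartbeats 1000000
set_option maxHeartbeats 1000000

noncomputable section

/-- The field of real rational functions. -/
abbrev FF : Type := RatFunc ℝ

/-- The rational function `λ` (the image of the polynomial indeterminate `X`). -/
noncomputable def lam : FF := RatFunc.X

/-- Entrywise embedding of a real matrix into matrices over `FF`. -/
noncomputable def mapF {k l : Type} (M : Matrix k l ℝ) : Matrix k l FF :=
  M.map (algebraMap ℝ FF)

/-- The pencil `λ I - M` over `FF`, for a real square matrix `M`. -/
noncomputable def lamI {k : Type} [Fintype k] [DecidableEq k] (M : Matrix k k ℝ) :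
    Matrix k k FF := lam • (1 : Matrix k k FF) - mapF M

/-- Entrywise complexification of a real matrix. -/
def mapC {k l : Type} (M : Matrix k l ℝ) : Matrix k l ℂ :=
  M.map (algebraMap ℝ ℂ)

/-- A real rational function is stable if every complex root of its reduced denominator
has real part `< 0`. -/
def StableF (f : RatFunc ℝ) : Prop :=
  ∀ z : ℂ, ((f.denom).map (algebraMap ℝ ℂ)).IsRoot z → z.re < 0

/-- A real square matrix is Hurwitz if all roots of its characteristic polynomial
have real part `< 0`. -/
def IsHurwitz {k : Type} [Fintype k] [DecidableEq k] (M : Matrix k k ℝ) : Prop :=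
  ∀ z : ℂ, ((M.charpoly).map (algebraMap ℝ ℂ)).IsRoot z → z.re < 0

/-- `A_K := K A11 - K A12 K + A21 - A22 K`. -/
noncomputable def AKmat {p r : ℕ} (A11 : Matrix (Fin p) (Fin p) ℝ)
    (A12 : Matrix (Fin p) (Fin r) ℝ) (A21 : Matrix (Fin r) (Fin p) ℝ)
    (A22 : Matrix (Fin r) (Fin r) ℝ) (K : Matrix (Fin r) (Fin p) ℝ) :
    Matrix (Fin r) (Fin p) ℝ :=
  K * A11 - K * A12 * K + A21 - A22 * K

/-- The `W` member of the SRTR pair obtained from `K`. -/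
noncomputable def srtrW {p r : ℕ} (A11 : Matrix (Fin p) (Fin p) ℝ)
    (A12 : Matrix (Fin p) (Fin r) ℝ) (A21 : Matrix (Fin r) (Fin p) ℝ)
    (A22 : Matrix (Fin r) (Fin r) ℝ) (K : Matrix (Fin r) (Fin p) ℝ) :
    Matrix (Fin p) (Fin p) FF :=
  mapF (A11 - A12 * K) +
    mapF A12 * (lamI (A22 + K * A12))⁻¹ * mapF (AKmat A11 A12 A21 A22 K)

/-- The `V` member of the SRTR pair obtained from `K`. -/
noncomputable def srtrV {p r m : ℕ} (A12 : Matrix (Fin p) (Fin r) ℝ)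
    (A22 : Matrix (Fin r) (Fin r) ℝ) (B1 : Matrix (Fin p) (Fin m) ℝ)
    (B2 : Matrix (Fin r) (Fin m) ℝ) (K : Matrix (Fin r) (Fin p) ℝ) :
    Matrix (Fin p) (Fin m) FF :=
  mapF B1 + mapF A12 * (lamI (A22 + K * A12))⁻¹ * mapF (K * B1 + B2)

/-- The plant transfer function `G = [I_p 0] (λ I_n - A)⁻¹ B`. -/
noncomputable def plantG {p r m : ℕ} (A11 : Matrix (Fin p) (Fin p) ℝ)
    (A12 : Matrix (Fin p) (Fin r) ℝ) (A21 : Matrix (Fin r) (Fin p) ℝ)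
    (A22 : Matrix (Fin r) (Fin r) ℝ) (B1 : Matrix (Fin p) (Fin m) ℝ)
    (B2 : Matrix (Fin r) (Fin m) ℝ) : Matrix (Fin p) (Fin m) FF :=
  fromCols (1 : Matrix (Fin p) (Fin p) FF) (0 : Matrix (Fin p) (Fin r) FF) *
    (lamI (fromBlocks A11 A12 A21 A22))⁻¹ * mapF (fromRows B1 B2)

/-- `(A12, A22)` is observable: `[A22 - μ I ; A12]` has full column rank for all `μ : ℂ`. -/
def ObsPair {p r : ℕ} (A12 : Matrix (Fin p) (Fin r) ℝ)
    (A22 : Matrix (Fin r) (Fin r) ℝ) : Prop :=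
  ∀ μ : ℂ, (fromRows (mapC A22 - μ • (1 : Matrix (Fin r) (Fin r) ℂ)) (mapC A12)).rank = r

/-- `(A, B)` is controllable: `[A - μ I, B]` has full row rank for all `μ : ℂ`. -/
def CtrbPair {p r m : ℕ} (A : Matrix (Fin p ⊕ Fin r) (Fin p ⊕ Fin r) ℝ)
    (B : Matrix (Fin p ⊕ Fin r) (Fin m) ℝ) : Prop :=
  ∀ μ : ℂ, (fromCols (mapC A - μ • (1 : Matrix (Fin p ⊕ Fin r) (Fin p ⊕ Fin r) ℂ))
    (mapC B)).rank = p + r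

section MyAux

lemma my_rank_eq_card_iff {k l : Type} [Fintype k] [Fintype l] (A : Matrix k l ℂ) :
    A.rank = Fintype.card l ↔ ∀ x : l → ℂ, A.mulVec x = 0 → x = 0 := by
  have hrn := LinearMap.finrank_range_add_finrank_ker A.mulVecLin
  rw [Module.finrank_fintype_fun_eq_card] at hrn
  have hker : (∀ x : l → ℂ, A.mulVec x = 0 → x = 0) ↔ LinearMap.ker A.mulVecLin = ⊥ := by
    rw [Submodule.eq_bot_iff]
    constructor
    · intro h x hx
      exact h x (by simpa [Matrix.mulVecLin_apply] using hx)
    · intro h x hx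
      exact h x (by simpa [LinearMap.mem_ker, Matrix.mulVecLin_apply] using hx)
  rw [hker, ← Submodule.finrank_eq_zero (R := ℂ)]
  unfold Matrix.rank
  omega

lemma mapC_mul {k l o : Type} [Fintype l] (M : Matrix k l ℝ) (N : Matrix l o ℝ) :
    mapC (M * N) = mapC M * mapC N :=
  Matrix.map_mul (f := algebraMap ℝ ℂ)

lemma mapC_add {k l : Type} (M N : Matrix k l ℝ) :
    mapC (M + N) = mapC M + mapC N :=
  Matrix.map_add _ (fun a b => by simp) M N

lemma mapC_sub {k l : Type} (M N : Matrix k l ℝ) :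
    mapC (M - N) = mapC M - mapC N :=
  Matrix.map_sub _ (fun a b => by simp) M N

lemma mapC_fromRows {k₁ k₂ l : Type} (M : Matrix k₁ l ℝ) (N : Matrix k₂ l ℝ) :
    mapC (fromRows M N) = fromRows (mapC M) (mapC N) := by
  ext (i | i) j <;> rfl

lemma mapC_fromBlocks {k₁ k₂ l₁ l₂ : Type} (M₁₁ : Matrix k₁ l₁ ℝ) (M₁₂ : Matrix k₁ l₂ ℝ)
    (M₂₁ : Matrix k₂ l₁ ℝ) (M₂₂ : Matrix k₂ l₂ ℝ) :
    mapC (fromBlocks M₁₁ M₁₂ M₂₁ M₂₂)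
      = fromBlocks (mapC M₁₁) (mapC M₁₂) (mapC M₂₁) (mapC M₂₂) := by
  ext (i | i) (j | j) <;> rfl

lemma my_fromBlocks_sub {k₁ k₂ l₁ l₂ : Type} (a e : Matrix k₁ l₁ ℂ) (b f : Matrix k₁ l₂ ℂ)
    (c g : Matrix k₂ l₁ ℂ) (d h : Matrix k₂ l₂ ℂ) :
    fromBlocks a b c d - fromBlocks e f g h = fromBlocks (a - e) (b - f) (c - g) (d - h) := by
  ext (i | i) (j | j) <;> simp [fromBlocks]

end MyAux

/-- under observability and controllability, the Rosenbrock-type realization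
of `[λ I_p - W, V]` is irreducible: for every `K` and `μ : ℂ`, (i) the stacked pencil has
full column rank `n` and (ii) the wide pencil has full row rank `n`. -/
theorem stmt_7 (p r m : ℕ) (hp : 0 < p) (hr : 0 < r) (hm : 0 < m)
    (A11 : Matrix (Fin p) (Fin p) ℝ) (A12 : Matrix (Fin p) (Fin r) ℝ)
    (A21 : Matrix (Fin r) (Fin p) ℝ) (A22 : Matrix (Fin r) (Fin r) ℝ)
    (B1 : Matrix (Fin p) (Fin m) ℝ) (B2 : Matrix (Fin r) (Fin m) ℝ)
    (hobs : ObsPair A12 A22)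
    (hctrb : CtrbPair (fromBlocks A11 A12 A21 A22) (fromRows B1 B2)) :
    ∀ (K : Matrix (Fin r) (Fin p) ℝ) (μ : ℂ),
      (fromRows
        (fromBlocks (mapC (A22 + K * A12) - μ • (1 : Matrix (Fin r) (Fin r) ℂ))
          (0 : Matrix (Fin r) (Fin p) ℂ) (0 : Matrix (Fin p) (Fin r) ℂ)
          (1 : Matrix (Fin p) (Fin p) ℂ))
        (fromCols (mapC A12) (1 : Matrix (Fin p) (Fin p) ℂ))).rank = r + p ∧
      (fromBlocks
        (fromCols (mapC (A22 + K * A12) - μ • (1 : Matrix (Fin r) (Fin r) ℂ))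
          (0 : Matrix (Fin r) (Fin p) ℂ))
        (fromCols (mapC (K * A12 * K + A22 * K - K * A11 - A21)) (mapC (K * B1 + B2)))
        (fromCols (0 : Matrix (Fin p) (Fin r) ℂ) (1 : Matrix (Fin p) (Fin p) ℂ))
        (fromCols (-(μ • (1 : Matrix (Fin p) (Fin p) ℂ)))
          (0 : Matrix (Fin p) (Fin m) ℂ))).rank = r + p := by
  intro K μ
  have hcard : r + p = Fintype.card (Fin r ⊕ Fin p) := by simp
  -- observability as a kernel statement
  have hO : ∀ x : Fin r → ℂ,
      (fromRows (mapC A22 - μ • (1 : Matrix (Fin r) (Fin r) ℂ)) (mapC A12)).mulVec x = 0 →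
      x = 0 := by
    refine (my_rank_eq_card_iff _).mp ?_
    rw [hobs μ]; simp
  -- controllability as a left-kernel statement
  have hC : ∀ z : (Fin p ⊕ Fin r) → ℂ,
      Matrix.vecMul z (fromCols
        (mapC (fromBlocks A11 A12 A21 A22)
          - μ • (1 : Matrix (Fin p ⊕ Fin r) (Fin p ⊕ Fin r) ℂ))
        (mapC (fromRows B1 B2))) = 0 → z = 0 := by
    intro z hz
    refine (my_rank_eq_card_iff (fromCols
        (mapC (fromBlocks A11 A12 A21 A22)
          - μ • (1 : Matrix (Fin p ⊕ Fin r) (Fin p ⊕ Fin r) ℂ))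
        (mapC (fromRows B1 B2)))ᵀ).mp ?_ z ?_
    · rw [Matrix.rank_transpose, hctrb μ]; simp
    · rw [Matrix.mulVec_transpose]; exact hz
  constructor
  · -- part (i): full column rank
    rw [hcard]
    refine (my_rank_eq_card_iff _).mpr ?_
    intro x hx
    set x1 : Fin r → ℂ := x ∘ Sum.inl with hx1def
    set x2 : Fin p → ℂ := x ∘ Sum.inr with hx2def
    have hxe : x = Sum.elim x1 x2 := by funext i; cases i <;> rfl
    rw [Matrix.fromRows_mulVec, Matrix.fromBlocks_mulVec] at hx
    have hE : (mapC (A22 + K * A12) - μ • (1 : Matrix (Fin r) (Fin r) ℂ)) *ᵥ x1 = 0 := by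
      funext i
      have := congrFun hx (Sum.inl (Sum.inl i))
      simpa [x1] using this
    have hx2 : x2 = 0 := by
      funext i
      have := congrFun hx (Sum.inl (Sum.inr i))
      simpa [x2] using this
    have hA12x : mapC A12 *ᵥ x1 = 0 := by
      have h3 : (fromCols (mapC A12) (1 : Matrix (Fin p) (Fin p) ℂ)) *ᵥ x = 0 := by
        funext i
        have := congrFun hx (Sum.inr i)
        simpa using this
      rw [hxe, Matrix.fromCols_mulVec_sumElim, hx2, Matrix.mulVec_zero, add_zero] at h3
      exact h3
    have hx1 : x1 = 0 := by
      refine hO x1 ?_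
      rw [Matrix.fromRows_mulVec]
      have e : (mapC A22 - μ • (1 : Matrix (Fin r) (Fin r) ℂ)) *ᵥ x1
          = (mapC (A22 + K * A12) - μ • (1 : Matrix (Fin r) (Fin r) ℂ)) *ᵥ x1
            - mapC K *ᵥ (mapC A12 *ᵥ x1) := by
        rw [mapC_add, mapC_mul, Matrix.mulVec_mulVec, Matrix.sub_mulVec, Matrix.sub_mulVec,
          Matrix.add_mulVec]
        abel
      rw [e, hE, hA12x, Matrix.mulVec_zero, sub_zero]
      funext i; cases i <;> rfl
    rw [hxe, hx1, hx2]
    funext i; cases i <;> rfl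
  · -- part (ii): full row rank
    rw [hcard, ← Matrix.rank_transpose]
    refine (my_rank_eq_card_iff _).mpr ?_
    intro u hu
    rw [Matrix.mulVec_transpose] at hu
    rw [Matrix.vecMul_fromBlocks] at hu
    simp only [Matrix.vecMul_fromCols] at hu
    set u1 : Fin r → ℂ := u ∘ Sum.inl with hu1def
    set u2 : Fin p → ℂ := u ∘ Sum.inr with hu2def
    have hF1 : u1 ᵥ* (mapC (A22 + K * A12) - μ • (1 : Matrix (Fin r) (Fin r) ℂ)) = 0 := by
      funext i
      have := congrFun hu (Sum.inl (Sum.inl i))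
      simpa [u1, u2, Matrix.vecMul_zero] using this
    have hu2z : u2 = 0 := by
      funext i
      have := congrFun hu (Sum.inl (Sum.inr i))
      simpa [u1, u2, Matrix.vecMul_zero, Matrix.vecMul_one] using this
    have hF2 : u1 ᵥ* mapC (K * A12 * K + A22 * K - K * A11 - A21) = 0 := by
      funext i
      have := congrFun hu (Sum.inr (Sum.inl i))
      simpa [hu2z, Matrix.zero_vecMul, Matrix.vecMul_zero] using this
    have hF3 : u1 ᵥ* mapC (K * B1 + B2) = 0 := by
      funext i
      have := congrFun hu (Sum.inr (Sum.inr i))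
      simpa [u1, u2, Matrix.vecMul_zero] using this
    -- build a left-kernel vector for the controllability pencil
    set w : Fin p → ℂ := u1 ᵥ* mapC K with hwdef
    have hF1K : u1 ᵥ* ((mapC (A22 + K * A12) - μ • (1 : Matrix (Fin r) (Fin r) ℂ)) * mapC K)
        = 0 := by
      rw [← Matrix.vecMul_vecMul, hF1, Matrix.zero_vecMul]
    have hz : Sum.elim w u1 ᵥ* (fromCols
        (mapC (fromBlocks A11 A12 A21 A22)
          - μ • (1 : Matrix (Fin p ⊕ Fin r) (Fin p ⊕ Fin r) ℂ))
        (mapC (fromRows B1 B2))) = 0 := by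
      rw [Matrix.vecMul_fromCols]
      have honeblk : (1 : Matrix (Fin p ⊕ Fin r) (Fin p ⊕ Fin r) ℂ)
          = fromBlocks 1 0 0 1 := (Matrix.fromBlocks_one).symm
      rw [mapC_fromBlocks, mapC_fromRows, honeblk, Matrix.fromBlocks_smul,
        my_fromBlocks_sub, Matrix.vecMul_fromBlocks, Matrix.sumElim_vecMul_fromRows]
      simp only [Sum.elim_comp_inl, Sum.elim_comp_inr, smul_zero, sub_zero]
      have hGa : w ᵥ* (mapC A11 - μ • (1 : Matrix (Fin p) (Fin p) ℂ)) + u1 ᵥ* mapC A21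
          = 0 := by
        have key : mapC K * (mapC A11 - μ • (1 : Matrix (Fin p) (Fin p) ℂ)) + mapC A21
            = (mapC (A22 + K * A12) - μ • (1 : Matrix (Fin r) (Fin r) ℂ)) * mapC K
              - mapC (K * A12 * K + A22 * K - K * A11 - A21) := by
          simp only [mapC_add, mapC_sub, mapC_mul, Matrix.mul_sub, Matrix.sub_mul,
            Matrix.add_mul, Matrix.smul_mul, Matrix.mul_smul, Matrix.one_mul, Matrix.mul_one,
            Matrix.mul_assoc]
          abel
        rw [hwdef, Matrix.vecMul_vecMul, ← Matrix.vecMul_add, key, Matrix.vecMul_sub,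
          hF1K, hF2, sub_zero]
      have hGb : w ᵥ* mapC A12 + u1 ᵥ* (mapC A22 - μ • (1 : Matrix (Fin r) (Fin r) ℂ))
          = 0 := by
        have key : mapC K * mapC A12 + (mapC A22 - μ • (1 : Matrix (Fin r) (Fin r) ℂ))
            = mapC (A22 + K * A12) - μ • (1 : Matrix (Fin r) (Fin r) ℂ) := by
          rw [mapC_add, mapC_mul]; abel
        rw [hwdef, Matrix.vecMul_vecMul, ← Matrix.vecMul_add, key, hF1]
      have hGc : w ᵥ* mapC B1 + u1 ᵥ* mapC B2 = 0 := by
        have key : mapC K * mapC B1 + mapC B2 = mapC (K * B1 + B2) := by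
          rw [mapC_add, mapC_mul]
        rw [hwdef, Matrix.vecMul_vecMul, ← Matrix.vecMul_add, key, hF3]
      funext i
      rcases i with (i | i) | i
      · simpa using congrFun hGa i
      · simpa using congrFun hGb i
      · simpa using congrFun hGc i
    have hz0 := hC (Sum.elim w u1) hz
    have hu1z : u1 = 0 := by
      funext i
      exact congrFun hz0 (Sum.inr i)
    funext i
    rcases i with i | i
    · exact congrFun hu1z i
    · exact congrFun hu2z i
end
end

section
/- Let F1 ∈ ℝ^{p×p}, F2 ∈ ℝ^{(n−p)×p}, let U ∈ ℝ^{p×p} be invertible, and let K ∈ ℝ^{(n−p)×p} satisfy the non-symmetric algebraic Riccati equation K·(A11 + F1) − K·A12·K + (A21 + F2) − A22·K = 0; set A_x := A11 + F1 − A12·K. Then the two state-space realizations define the same transfer function matrix over F: [U, 0]·(λI_n − [[A11 + F1, A12],[A21 + F2, A22]])^{-1}·[[F1, B1],[F2, B2]] + [U, 0] = [U, 0]·(λI_n − [[A_x, A12],[0, A22 + K·A12]])^{-1}·[[A_x − A11 + A12·K, B1],[K·A12·K + A22·K − K·A11 − A21, K·B1 + B2]] + [U, 0] (equality of p×(p+m)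 matrices over F). -/
open Matrix Polynomial

set_option synthInstance.maxHeartbeats 1000000
set_option maxHeartbeats 1000000

noncomputable section

lemma lamI_eq_charmatrix {k : Type} [Fintype k] [DecidableEq k] (M : Matrix k k ℝ) :
    lamI M = (charmatrix M).map (algebraMap ℝ[X] FF) := by
  ext i j
  by_cases h : i = j
  · subst h
    simp only [lamI, mapF, Matrix.sub_apply, Matrix.smul_apply, Matrix.map_apply,
      Matrix.one_apply_eq, charmatrix_apply_eq, map_sub, smul_eq_mul, mul_one]
    rw [lam, ← RatFunc.algebraMap_X, IsScalarTower.algebraMap_apply ℝ ℝ[X] FF]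
    rfl
  · simp only [lamI, mapF, Matrix.sub_apply, Matrix.smul_apply, Matrix.map_apply,
      Matrix.one_apply_ne h, charmatrix_apply_ne _ _ _ h, map_neg, smul_zero, zero_sub]
    rw [IsScalarTower.algebraMap_apply ℝ ℝ[X] FF]
    rfl

lemma isUnit_lamI {k : Type} [Fintype k] [DecidableEq k] (M : Matrix k k ℝ) :
    IsUnit (lamI M) := by
  rw [Matrix.isUnit_iff_isUnit_det, lamI_eq_charmatrix]
  have h : (charmatrix M).map (algebraMap ℝ[X] FF)
      = (algebraMap ℝ[X] FF).mapMatrix (charmatrix M) := rfl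
  rw [h, ← RingHom.map_det, isUnit_iff_ne_zero]
  intro hc
  exact M.charpoly_monic.ne_zero
    ((map_eq_zero_iff _ (RatFunc.algebraMap_injective ℝ)).mp hc)

lemma mapF_mul {k l o : Type} [Fintype l] (M : Matrix k l ℝ) (N : Matrix l o ℝ) :
    mapF (M * N) = mapF M * mapF N :=
  Matrix.map_mul

lemma mapF_one {k : Type} [Fintype k] [DecidableEq k] :
    mapF (1 : Matrix k k ℝ) = 1 :=
  Matrix.map_one _ (map_zero _) (map_one _)

lemma lamI_conj {k : Type} [Fintype k] [DecidableEq k] (P M Q : Matrix k k ℝ)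
    (h : P * Q = 1) : mapF P * lamI M * mapF Q = lamI (P * M * Q) := by
  unfold lamI
  rw [Matrix.mul_sub, Matrix.sub_mul, mul_smul_comm, smul_mul_assoc, mul_one,
    ← mapF_mul, h, mapF_one, ← mapF_mul, ← mapF_mul]


/-- if `K` solves the non-symmetric algebraic Riccati equation, the two
state-space realizations of the left factorization `[M N]` define the same transfer
function matrix over `FF`. -/
theorem stmt_10 (p r m : ℕ) (hp : 0 < p) (hr : 0 < r) (hm : 0 < m)
    (A11 : Matrix (Fin p) (Fin p) ℝ) (A12 : Matrix (Fin p) (Fin r) ℝ)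
    (A21 : Matrix (Fin r) (Fin p) ℝ) (A22 : Matrix (Fin r) (Fin r) ℝ)
    (B1 : Matrix (Fin p) (Fin m) ℝ) (B2 : Matrix (Fin r) (Fin m) ℝ)
    (F1 : Matrix (Fin p) (Fin p) ℝ) (F2 : Matrix (Fin r) (Fin p) ℝ)
    (U : Matrix (Fin p) (Fin p) ℝ) (hU : IsUnit U)
    (K : Matrix (Fin r) (Fin p) ℝ)
    (hric : K * (A11 + F1) - K * A12 * K + (A21 + F2) - A22 * K = 0) :
    let Ax : Matrix (Fin p) (Fin p) ℝ := A11 + F1 - A12 * K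
    fromCols (mapF U) (0 : Matrix (Fin p) (Fin r) FF) *
        (lamI (fromBlocks (A11 + F1) A12 (A21 + F2) A22))⁻¹ *
        mapF (fromBlocks F1 B1 F2 B2) +
      fromCols (mapF U) (0 : Matrix (Fin p) (Fin m) FF) =
    fromCols (mapF U) (0 : Matrix (Fin p) (Fin r) FF) *
        (lamI (fromBlocks Ax A12 0 (A22 + K * A12)))⁻¹ *
        mapF (fromBlocks (Ax - A11 + A12 * K) B1
          (K * A12 * K + A22 * K - K * A11 - A21) (K * B1 + B2)) +
      fromCols (mapF U) (0 : Matrix (Fin p) (Fin m) FF) := by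

  intro Ax
  have hAx : Ax - A11 + A12 * K = F1 := by
    show A11 + F1 - A12 * K - A11 + A12 * K = F1
    abel
  rw [hAx]
  set Tr : Matrix (Fin p ⊕ Fin r) (Fin p ⊕ Fin r) ℝ := fromBlocks 1 0 K 1 with hTr
  set Ti : Matrix (Fin p ⊕ Fin r) (Fin p ⊕ Fin r) ℝ := fromBlocks 1 0 (-K) 1 with hTi
  have hTT : Tr * Ti = 1 := by
    rw [hTr, hTi, fromBlocks_multiply, ← fromBlocks_one, Matrix.fromBlocks_inj]
    refine ⟨by simp, by simp, by simp, by simp⟩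
  have hTT' : Ti * Tr = 1 := by
    rw [hTr, hTi, fromBlocks_multiply, ← fromBlocks_one, Matrix.fromBlocks_inj]
    refine ⟨by simp, by simp, by simp, by simp⟩
  have hconj : Tr * fromBlocks (A11 + F1) A12 (A21 + F2) A22 * Ti =
      fromBlocks Ax A12 0 (A22 + K * A12) := by
    rw [hTr, hTi, fromBlocks_multiply, fromBlocks_multiply, Matrix.fromBlocks_inj]
    refine ⟨?_, by simp, ?_, by simp [add_comm]⟩
    · show _ = A11 + F1 - A12 * K
      simp only [Matrix.one_mul, Matrix.mul_one, Matrix.zero_mul, Matrix.mul_zero,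
        add_zero, zero_add, Matrix.mul_neg, Matrix.neg_mul, Matrix.add_mul]
      abel
    · simp only [Matrix.one_mul, Matrix.mul_one, Matrix.zero_mul, Matrix.mul_zero,
        add_zero, zero_add, Matrix.mul_neg, Matrix.neg_mul, Matrix.add_mul]
      rw [← hric]
      abel
  have hB : Ti * fromBlocks F1 B1
      (K * A12 * K + A22 * K - K * A11 - A21) (K * B1 + B2) = fromBlocks F1 B1 F2 B2 := by
    have h := hric
    rw [Matrix.mul_add] at h
    have h2 : -(K * A11 + K * F1 - K * A12 * K + (A21 + F2) - A22 * K)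
        = (0 : Matrix (Fin r) (Fin p) ℝ) := by rw [h, neg_zero]
    rw [hTi, fromBlocks_multiply, Matrix.fromBlocks_inj]
    refine ⟨by simp, by simp, ?_, ?_⟩
    · rw [Matrix.neg_mul, Matrix.one_mul, ← sub_eq_zero, ← h2]
      abel
    · rw [Matrix.neg_mul, Matrix.one_mul]
      abel
  have hTrF : mapF Tr = fromBlocks 1 0 (mapF K) 1 := by
    rw [hTr, mapF, fromBlocks_map,
      Matrix.map_one _ (map_zero _) (map_one _),
      Matrix.map_one _ (map_zero _) (map_one _),
      Matrix.map_zero _ (map_zero _)]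
    rfl
  have hCT : fromCols (mapF U) (0 : Matrix (Fin p) (Fin r) FF) * mapF Tr =
      fromCols (mapF U) 0 := by
    rw [hTrF, fromCols_mul_fromBlocks]
    simp
  have hinv : (lamI (fromBlocks Ax A12 0 (A22 + K * A12)))⁻¹ =
      mapF Tr * (lamI (fromBlocks (A11 + F1) A12 (A21 + F2) A22))⁻¹ * mapF Ti := by
    rw [← hconj, ← lamI_conj _ _ _ hTT, Matrix.mul_inv_rev, Matrix.mul_inv_rev,
      Matrix.inv_eq_right_inv (show mapF Ti * mapF Tr = 1 by rw [← mapF_mul, hTT', mapF_one]),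
      Matrix.inv_eq_right_inv (show mapF Tr * mapF Ti = 1 by rw [← mapF_mul, hTT, mapF_one])]
    simp [mul_assoc]
  rw [hinv]
  congr 1
  rw [← Matrix.mul_assoc, ← Matrix.mul_assoc, hCT, Matrix.mul_assoc, Matrix.mul_assoc,
    ← mapF_mul, hB, ← Matrix.mul_assoc]
end
end
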